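/- Let X be a finite-dimensional complex analytic manifold and let U be an open subset of X which is bounded for the Carathéodory pseudodistance c_X. Set M = sup_{x∈U, y∈U} c_X(x,y) and k = tanh(M) < 1. Then for all x ∈ U and all y ∈ U, c_X(x,y) ≤ k · c_U(x,y). -/

import Mathlib

open scoped Manifold ENNReal

/-- The inverse hyperbolic tangent (tanh⁻¹), the inverse of `Real.tanh` on `(-1, 1)`. -/
noncomputable def artanh (x : ℝ) : ℝ := Real.log ((1 + x) / (1 - x)) / 2

/-- The Poincaré distance on the unit disc `Δ ⊂ ℂ`:
`ω(z, w) = tanh⁻¹ |(z - w) / (1 - w̄ z)|`. -/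
noncomputable def poincareDist (z w : ℂ) : ℝ :=
  artanh (‖(z - w) / (1 - (starRingEnd ℂ) w * z)‖)

/-- The Carathéodory pseudodistance of a complex manifold `X` modeled on `E`:
`c_X(x, y) = sup { ω(φ x, φ y) : φ : X → Δ holomorphic }` (with values in `[0, ∞]`). -/
noncomputable def caratheodory (E : Type*) [NormedAddCommGroup E] [NormedSpace ℂ E]
    (X : Type*) [TopologicalSpace X] [ChartedSpace E X] (x y : X) : ℝ≥0∞ :=
  ⨆ φ ∈ {φ : X → ℂ | MDifferentiable 𝓘(ℂ, E) 𝓘(ℂ, ℂ) φ ∧ ∀ z, ‖φ z‖ < 1},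
    ENNReal.ofReal (poincareDist (φ x) (φ y))

/-! ### Auxiliary lemmas on `artanh` and `tanh` -/

lemma artanh_nonneg {x : ℝ} (h0 : 0 ≤ x) (h1 : x < 1) : 0 ≤ artanh x := by
  have : (1:ℝ) ≤ (1 + x) / (1 - x) := by
    rw [le_div_iff₀ (by linarith)]; linarith
  have := Real.log_nonneg this
  unfold artanh; linarith

lemma tanh_eq' (x : ℝ) : Real.tanh x = (Real.exp (2*x) - 1) / (Real.exp (2*x) + 1) := by
  rw [Real.tanh_eq_sinh_div_cosh, Real.sinh_eq, Real.cosh_eq]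
  have h1 : Real.exp x ≠ 0 := Real.exp_ne_zero x
  have h2 : Real.exp x + Real.exp (-x) > 0 := by positivity
  have h3 : Real.exp (2*x) + 1 > 0 := by positivity
  have h4 : Real.exp (2*x) = Real.exp x * Real.exp x := by
    rw [← Real.exp_add]; ring_nf
  have h5 : Real.exp (-x) = (Real.exp x)⁻¹ := Real.exp_neg x
  rw [h4, h5]
  rw [div_eq_div_iff (by positivity) (by positivity)]
  field_simp

lemma tanh_artanh {x : ℝ} (h0 : 0 ≤ x) (h1 : x < 1) : Real.tanh (artanh x) = x := by
  have hx1 : (0:ℝ) < 1 - x := by linarith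
  have hpos : (0:ℝ) < (1 + x) / (1 - x) := by positivity
  rw [tanh_eq']
  have h2 : 2 * artanh x = Real.log ((1 + x) / (1 - x)) := by unfold artanh; ring
  rw [h2, Real.exp_log hpos]
  rw [div_eq_iff (by positivity)]
  field_simp
  ring

lemma tanh_monotone : Monotone Real.tanh := by
  intro a b hab
  rw [Real.tanh_eq_sinh_div_cosh, Real.tanh_eq_sinh_div_cosh,
    div_le_div_iff₀ (Real.cosh_pos a) (Real.cosh_pos b)]
  have := Real.sinh_nonneg_iff.mpr (sub_nonneg.mpr hab)
  rw [Real.sinh_sub] at this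
  nlinarith

lemma tanh_lt_one (x : ℝ) : Real.tanh x < 1 := by
  rw [Real.tanh_eq_sinh_div_cosh, div_lt_one (Real.cosh_pos x)]
  have := Real.cosh_sub_sinh x
  have := Real.exp_pos (-x)
  linarith

lemma tanh_pos {x : ℝ} (h : 0 < x) : 0 < Real.tanh x := by
  rw [Real.tanh_eq_sinh_div_cosh]
  exact div_pos (Real.sinh_pos_iff.mpr h) (Real.cosh_pos x)

lemma hasDerivAt_artanh {x : ℝ} (h1 : -1 < x) (h2 : x < 1) :
    HasDerivAt artanh (1 / (1 - x^2)) x := by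
  have ha : (0:ℝ) < 1 + x := by linarith
  have hb : (0:ℝ) < 1 - x := by linarith
  have hu : HasDerivAt (fun y : ℝ => (1 + y) / (1 - y)) (2 / (1 - x)^2) x := by
    have h1' : HasDerivAt (fun y : ℝ => 1 + y) 1 x := (hasDerivAt_id x).const_add 1
    have h2' : HasDerivAt (fun y : ℝ => 1 - y) (-1) x := by
      simpa using (hasDerivAt_id x).const_sub 1
    have := h1'.div h2' hb.ne'
    refine HasDerivAt.congr_deriv this ?_
    ring
  have hlog := (Real.hasDerivAt_log (by positivity : ((1:ℝ) + x) / (1 - x) ≠ 0)).comp x hu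
  have hc : (0:ℝ) < 1 - x^2 := by nlinarith
  have := hlog.div_const 2
  refine HasDerivAt.congr_deriv this ?_
  symm
  rw [div_eq_div_iff hc.ne' (by positivity)]
  field_simp
  ring

lemma artanh_mul_le {κ s : ℝ} (hκ0 : 0 ≤ κ) (hκ1 : κ ≤ 1) (hs0 : 0 ≤ s) (hs1 : s < 1) :
    artanh (κ * s) ≤ κ * artanh s := by
  set g : ℝ → ℝ := fun y => κ * artanh y - artanh (κ * y) with hg
  have key : ∀ y : ℝ, -1 < y → y < 1 →
      HasDerivAt g (κ * (1 / (1 - y^2)) - 1 / (1 - (κ*y)^2) * κ) y := by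
    intro y hy1 hy2
    have hκy1 : -1 < κ * y := by nlinarith
    have hκy2 : κ * y < 1 := by nlinarith
    have d1 : HasDerivAt (fun y => κ * artanh y) (κ * (1 / (1 - y^2))) y :=
      (hasDerivAt_artanh hy1 hy2).const_mul κ
    have d2 : HasDerivAt (fun y => artanh (κ * y)) (1 / (1 - (κ*y)^2) * κ) y := by
      have hm : HasDerivAt (fun y : ℝ => κ * y) κ y := by
        simpa using (hasDerivAt_id y).const_mul κ
      exact (hasDerivAt_artanh hκy1 hκy2).comp y hm
    exact d1.sub d2
  have hmono : MonotoneOn g (Set.Icc 0 s) := by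
    apply monotoneOn_of_deriv_nonneg (convex_Icc 0 s)
    · intro y hy
      exact ((key y (by linarith [hy.1]) (by linarith [hy.2])).differentiableAt).continuousAt.continuousWithinAt
    · intro y hy
      rw [interior_Icc] at hy
      exact ((key y (by linarith [hy.1]) (by linarith [hy.2])).differentiableAt).differentiableWithinAt
    · intro y hy
      rw [interior_Icc] at hy
      have h1 : -1 < y := by linarith [hy.1]
      have h2 : y < 1 := by linarith [hy.2]
      rw [(key y h1 h2).deriv]
      have hκsq : κ^2 ≤ 1 := by nlinarith
      have hκy : κ^2 * y^2 ≤ y^2 := by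
        have := mul_le_mul_of_nonneg_right hκsq (sq_nonneg y)
        linarith
      have p1 : (0:ℝ) < 1 - y^2 := by nlinarith
      have p2 : (0:ℝ) < 1 - (κ*y)^2 := by nlinarith
      have : 1 / (1 - (κ*y)^2) ≤ 1 / (1 - y^2) := by
        apply one_div_le_one_div_of_le p1
        nlinarith
      nlinarith
  have h0 : g 0 = 0 := by
    simp [hg, artanh]
  have hs : g 0 ≤ g s := hmono (Set.left_mem_Icc.mpr hs0) (Set.right_mem_Icc.mpr hs0) hs0
  rw [h0] at hs
  simpa [hg] using hs

/-! ### Auxiliary lemmas on Möbius maps of the disc -/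

lemma moebius_denom_ne_zero {a b : ℂ} (ha : ‖a‖ < 1) (hb : ‖b‖ < 1) :
    (1 : ℂ) - (starRingEnd ℂ) a * b ≠ 0 := by
  intro h
  have h1 : (starRingEnd ℂ) a * b = 1 := by linear_combination -h
  have : ‖(starRingEnd ℂ) a * b‖ = 1 := by rw [h1, norm_one]
  rw [norm_mul, Complex.norm_conj] at this
  nlinarith [norm_nonneg a, norm_nonneg b]

lemma abs_moebius_lt_one {a b : ℂ} (ha : ‖a‖ < 1) (hb : ‖b‖ < 1) :
    ‖(b - a) / (1 - (starRingEnd ℂ) a * b)‖ < 1 := by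
  have hd := moebius_denom_ne_zero ha hb
  rw [norm_div, div_lt_one (norm_pos_iff.mpr hd)]
  have hns : Complex.normSq (b - a) < Complex.normSq (1 - (starRingEnd ℂ) a * b) := by
    have ha' : Complex.normSq a < 1 := by
      rw [← Complex.sq_norm]; nlinarith [norm_nonneg a]
    have hb' : Complex.normSq b < 1 := by
      rw [← Complex.sq_norm]; nlinarith [norm_nonneg b]
    simp only [Complex.normSq_apply, Complex.sub_re, Complex.sub_im, Complex.mul_re,
      Complex.mul_im, Complex.conj_re, Complex.conj_im, Complex.one_re, Complex.one_im] at *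
    nlinarith [mul_pos (by linarith : (0:ℝ) < 1 - (a.re*a.re + a.im*a.im))
      (by linarith : (0:ℝ) < 1 - (b.re*b.re + b.im*b.im))]
  rw [Complex.norm_def, Complex.norm_def]
  exact Real.sqrt_lt_sqrt (Complex.normSq_nonneg _) hns

lemma abs_moebius_symm (z w : ℂ) :
    ‖(z - w) / (1 - (starRingEnd ℂ) w * z)‖ =
    ‖(w - z) / (1 - (starRingEnd ℂ) z * w)‖ := by
  rw [norm_div, norm_div, norm_sub_rev z w]
  congr 1
  rw [← Complex.norm_conj (1 - (starRingEnd ℂ) w * z)]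
  congr 1
  simp [map_sub, map_mul, Complex.conj_conj]
  ring

lemma poincareDist_zero_right (w : ℂ) : poincareDist 0 w = artanh ‖w‖ := by
  unfold poincareDist
  simp

/-- Let `X` be a finite-dimensional complex analytic manifold and `U ⊆ X` an open subset
bounded for the Carathéodory pseudodistance `c_X`. With `M = sup_{x,y ∈ U} c_X(x,y)` and
`k = tanh M < 1`, one has `c_X(x,y) ≤ k · c_U(x,y)` for all `x, y ∈ U`. -/
theorem caratheodory_le_tanh_sup_mul
    {E : Type*} [NormedAddCommGroup E] [NormedSpace ℂ E] [FiniteDimensional ℂ E]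
    {X : Type*} [TopologicalSpace X] [ChartedSpace E X] [IsManifold 𝓘(ℂ, E) (⊤ : WithTop ℕ∞) X]
    (U : TopologicalSpace.Opens X)
    (M : ℝ≥0∞) (hM : M = ⨆ (x : U) (y : U), caratheodory E X (x : X) (y : X))
    (hbdd : M ≠ ⊤) (k : ℝ) (hk : k = Real.tanh M.toReal) :
    k < 1 ∧ ∀ x y : U,
      caratheodory E X (x : X) (y : X) ≤ ENNReal.ofReal k * caratheodory E U x y := by
  have hk1 : k < 1 := hk ▸ tanh_lt_one _
  refine ⟨hk1, ?_⟩
  intro x y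
  have hCle : ∀ u v : U, caratheodory E X (u : X) (v : X) ≤ M := by
    intro u v
    rw [hM]
    exact le_iSup₂ (f := fun (u v : U) => caratheodory E X (u : X) (v : X)) u v
  by_cases hM0 : M = 0
  · have := hCle x y
    rw [hM0] at this
    exact le_trans this (by simp)
  · have hMpos : 0 < M.toReal := ENNReal.toReal_pos hM0 hbdd
    have hkpos : 0 < k := hk ▸ tanh_pos hMpos
    rw [caratheodory]
    apply iSup₂_le
    rintro φ ⟨hφd, hφb⟩
    set a := φ (x : X) with ha
    set ψ : X → ℂ := fun z => (φ z - a) / (1 - (starRingEnd ℂ) a * φ z) with hψ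
    -- ψ is a holomorphic map X → Δ with ψ x = 0
    have hψd : MDifferentiable 𝓘(ℂ, E) 𝓘(ℂ, ℂ) ψ := by
      intro z
      have hout : DifferentiableAt ℂ (fun w : ℂ => (w - a) / (1 - (starRingEnd ℂ) a * w)) (φ z) := by
        apply DifferentiableAt.div
        · exact differentiableAt_id.sub_const a
        · exact (differentiableAt_const _).sub ((differentiableAt_const _).mul differentiableAt_id)
        · exact moebius_denom_ne_zero (hφb (x : X)) (hφb z)
      exact (mdifferentiableAt_iff_differentiableAt.mpr hout).comp z (hφd z)
    have hψb : ∀ z, ‖ψ z‖ < 1 := fun z =>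
      abs_moebius_lt_one (hφb (x : X)) (hφb z)
    have hψx : ψ (x : X) = 0 := by
      simp [hψ, ← ha]
    -- poincaré distance from φ x to φ z equals artanh |ψ z|
    have hpd : ∀ z : X, poincareDist (φ (x : X)) (φ z) = artanh ‖ψ z‖ := by
      intro z
      unfold poincareDist
      rw [abs_moebius_symm]
    -- |ψ z| ≤ k for z ∈ U
    have hbound : ∀ z : U, ‖ψ (z : X)‖ ≤ k := by
      intro z
      have h1 : ENNReal.ofReal (poincareDist (φ (x : X)) (φ (z : X))) ≤
          caratheodory E X (x : X) (z : X) :=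
        le_iSup₂ (f := fun (φ : X → ℂ)
          (_ : φ ∈ {φ : X → ℂ | MDifferentiable 𝓘(ℂ, E) 𝓘(ℂ, ℂ) φ ∧ ∀ z, ‖φ z‖ < 1}) =>
          ENNReal.ofReal (poincareDist (φ (x : X)) (φ (z : X)))) φ ⟨hφd, hφb⟩
      have h2 : poincareDist (φ (x : X)) (φ (z : X)) ≤ M.toReal := by
        have := le_trans h1 (hCle x z)
        exact (ENNReal.ofReal_le_iff_le_toReal hbdd).mp this
      rw [hpd] at h2
      have h3 := tanh_monotone h2
      rw [tanh_artanh (norm_nonneg _) (hψb (z : X)), ← hk] at h3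
      exact h3
    set t := ‖ψ (y : X)‖ with ht
    have hty : poincareDist (φ (x : X)) (φ (y : X)) = artanh t := hpd (y : X)
    rw [hty]
    have htk : t ≤ k := hbound y
    have ht0 : 0 ≤ t := norm_nonneg _
    -- case where the Carathéodory distance in U is infinite
    by_cases hCU : caratheodory E U x y = ⊤
    · rw [hCU, ENNReal.mul_top (ENNReal.ofReal_pos.mpr hkpos).ne']
      exact le_top
    -- main estimate with a margin ε
    have key : ∀ ε : ℝ, 0 < ε → k + ε ≤ 1 →
        ENNReal.ofReal (artanh t) ≤ ENNReal.ofReal (k + ε) * caratheodory E U x y := by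
      intro ε hε hε1
      set κ := k + ε with hκ
      have hκ0 : 0 < κ := by positivity
      set χ : U → ℂ := fun u => ψ (u : X) / (κ : ℂ) with hχ
      have hχd : MDifferentiable 𝓘(ℂ, E) 𝓘(ℂ, ℂ) χ := by
        have hincl : MDifferentiable 𝓘(ℂ, E) 𝓘(ℂ, E) (Subtype.val : U → X) :=
          (contMDiff_subtype_val (I := 𝓘(ℂ, E)) (n := 1)).mdifferentiable one_ne_zero
        have hdiv : MDifferentiable 𝓘(ℂ, ℂ) 𝓘(ℂ, ℂ) (fun w : ℂ => w / (κ : ℂ)) :=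
          mdifferentiable_iff_differentiable.mpr (differentiable_id.div_const _)
        exact hdiv.comp ((hψd.comp hincl))
      have hχb : ∀ u : U, ‖χ u‖ < 1 := by
        intro u
        rw [hχ]
        simp only [norm_div, Complex.norm_real, Real.norm_eq_abs]
        rw [abs_of_pos hκ0, div_lt_one hκ0]
        calc ‖ψ (u : X)‖ ≤ k := hbound u
          _ < κ := by rw [hκ]; linarith
      have hχx : χ x = 0 := by rw [hχ]; simp [hψx]
      have hχy : ‖χ y‖ = t / κ := by
        rw [hχ]
        simp only [norm_div, Complex.norm_real, Real.norm_eq_abs, abs_of_pos hκ0, ht]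
      have hle : ENNReal.ofReal (poincareDist (χ x) (χ y)) ≤ caratheodory E U x y :=
        le_iSup₂ (f := fun (φ : U → ℂ)
          (_ : φ ∈ {φ : U → ℂ | MDifferentiable 𝓘(ℂ, E) 𝓘(ℂ, ℂ) φ ∧ ∀ z, ‖φ z‖ < 1}) =>
          ENNReal.ofReal (poincareDist (φ x) (φ y))) χ ⟨hχd, hχb⟩
      have hpdχ : poincareDist (χ x) (χ y) = artanh (t / κ) := by
        rw [hχx, poincareDist_zero_right, hχy]
      rw [hpdχ] at hle
      have hstep : artanh t ≤ κ * artanh (t / κ) := by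
        have hs1 : t / κ < 1 := by
          rw [div_lt_one hκ0]; calc t ≤ k := htk
                                    _ < κ := by rw [hκ]; linarith
        have := artanh_mul_le hκ0.le hε1 (by positivity : (0:ℝ) ≤ t / κ) hs1
        rwa [mul_div_cancel₀ t hκ0.ne'] at this
      calc ENNReal.ofReal (artanh t) ≤ ENNReal.ofReal (κ * artanh (t / κ)) :=
            ENNReal.ofReal_le_ofReal hstep
        _ = ENNReal.ofReal κ * ENNReal.ofReal (artanh (t / κ)) := ENNReal.ofReal_mul hκ0.le
        _ ≤ ENNReal.ofReal κ * caratheodory E U x y := by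
            exact mul_le_mul_right hle _
    -- pass to the limit ε → 0
    apply ENNReal.le_of_forall_pos_le_add
    intro δ hδ hlt
    set c := (caratheodory E U x y).toReal with hc
    have hc0 : 0 ≤ c := ENNReal.toReal_nonneg
    set ε := min ((1 - k) / 2) ((δ : ℝ) / (c + 1)) with hε
    have hεpos : 0 < ε := by
      apply lt_min (by linarith)
      positivity
    have hε1 : k + ε ≤ 1 := by
      have := min_le_left ((1 - k) / 2) ((δ : ℝ) / (c + 1))
      rw [← hε] at this
      linarith
    have h := key ε hεpos hε1
    have hsplit : ENNReal.ofReal (k + ε) = ENNReal.ofReal k + ENNReal.ofReal ε :=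
      ENNReal.ofReal_add hkpos.le hεpos.le
    rw [hsplit, add_mul] at h
    refine h.trans (add_le_add le_rfl ?_)
    have hCUeq : caratheodory E U x y = ENNReal.ofReal c := by
      rw [hc, ENNReal.ofReal_toReal hCU]
    rw [hCUeq, ← ENNReal.ofReal_mul hεpos.le]
    have : ε * c ≤ (δ : ℝ) := by
      have h1 : ε ≤ (δ : ℝ) / (c + 1) := by
        rw [hε]; exact min_le_right _ _
      have h2 : ε * c ≤ ((δ : ℝ) / (c + 1)) * c :=
        mul_le_mul_of_nonneg_right h1 hc0
      have h3 : ((δ : ℝ) / (c + 1)) * c ≤ (δ : ℝ) := by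
        rw [div_mul_eq_mul_div, div_le_iff₀ (by linarith)]
        nlinarith [δ.coe_nonneg]
      linarith
    calc ENNReal.ofReal (ε * c) ≤ ENNReal.ofReal (δ : ℝ) := ENNReal.ofReal_le_ofReal this
      _ = (δ : ℝ≥0∞) := ENNReal.ofReal_coe_nnreal
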